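/- Let Φ be a Young function that does NOT satisfy the Δ₂-condition near infinity, i.e. for every K > 0 and t₀ > 0 there exists t ≥ t₀ with Φ(2t) > K·Φ(t). For t ≥ 0 let S(t) denote the right shift on functions on (0,1): (S(t)v)(r) = v(r − t) for r ∈ (t,1) and (S(t)v)(r) = 0 otherwise. Then there exists v ∈ L_Φ(0,1) such that ‖S(t)v − v‖_{L_Φ(0,1)} ≥ 1 for every t > 0; in particular the right shift semigroup on L_Φ(0,1) is not strongly continuous. -/

import Mathlib

open MeasureTheory Set Filter Topology ENNReal

noncomputable section

/-- A Young function on `(0,∞)`. -/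
def IsYoungFunction (Φ : ℝ → ℝ) : Prop :=
  StrictMonoOn Φ (Set.Ioi 0) ∧ ContinuousOn Φ (Set.Ioi 0) ∧
  ConvexOn ℝ (Set.Ioi 0) Φ ∧ (∀ t : ℝ, 0 < t → 0 < Φ t) ∧
  Filter.Tendsto (fun t => Φ t / t) (nhdsWithin 0 (Set.Ioi 0)) (nhds 0) ∧
  Filter.Tendsto (fun t => Φ t / t) Filter.atTop Filter.atTop

/-- Extension of a Young function to `ℝ≥0∞`. -/
def phiE (Φ : ℝ → ℝ) (x : ℝ≥0∞) : ℝ≥0∞ :=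
  if x = ∞ then ∞ else ENNReal.ofReal (Φ x.toReal)

/-- The Luxemburg (quasi-)norm `inf { k > 0 : ∫ Φ(g/k) dμ ≤ 1 }`. -/
def luxNorm {Ω : Type*} [MeasurableSpace Ω] (Φ : ℝ → ℝ) (μ : Measure Ω)
    (g : Ω → ℝ≥0∞) : ℝ≥0∞ :=
  sInf {k : ℝ≥0∞ | 0 < k ∧ k < ∞ ∧ ∫⁻ ω, phiE Φ (g ω / k) ∂μ ≤ 1}

/-- Failure of `Δ₂` with factor `2` implies failure with any factor `lam > 1`. -/
lemma notDelta_gen (Φ : ℝ → ℝ) (hmono : StrictMonoOn Φ (Set.Ioi 0))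
    (hpos : ∀ t : ℝ, 0 < t → 0 < Φ t)
    (hnotΔ2 : ∀ K t₀ : ℝ, 0 < K → 0 < t₀ → ∃ t : ℝ, t₀ ≤ t ∧ K * Φ t < Φ (2 * t))
    (lam : ℝ) (hlam : 1 < lam) (K t₀ : ℝ) (ht₀ : 0 < t₀) :
    ∃ t : ℝ, t₀ ≤ t ∧ K * Φ t < Φ (lam * t) := by
  by_contra h
  push_neg at h
  set K' : ℝ := max K 1 with hK'
  have hK'1 : 1 ≤ K' := le_max_right _ _
  have hK'0 : 0 < K' := lt_of_lt_of_le one_pos hK'1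
  have h' : ∀ s : ℝ, t₀ ≤ s → Φ (lam * s) ≤ K' * Φ s := by
    intro s hs
    exact (h s hs).trans (mul_le_mul_of_nonneg_right (le_max_left _ _)
      (hpos s (ht₀.trans_le hs)).le)
  obtain ⟨m, hm⟩ := pow_unbounded_of_one_lt (2 : ℝ) hlam
  have key : ∀ j : ℕ, ∀ s : ℝ, t₀ ≤ s → Φ (lam ^ j * s) ≤ K' ^ j * Φ s := by
    intro j
    induction j with
    | zero => intro s hs; simp
    | succ j ih =>
      intro s hs
      have hs0 : 0 < s := ht₀.trans_le hs
      have h1 : t₀ ≤ lam ^ j * s := by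
        nlinarith [one_le_pow₀ hlam.le (n := j), hs0]
      calc Φ (lam ^ (j + 1) * s) = Φ (lam * (lam ^ j * s)) := by ring_nf
        _ ≤ K' * Φ (lam ^ j * s) := h' _ h1
        _ ≤ K' * (K' ^ j * Φ s) := mul_le_mul_of_nonneg_left (ih s hs) hK'0.le
        _ = K' ^ (j + 1) * Φ s := by ring
  obtain ⟨t, ht, hlt⟩ := hnotΔ2 (K' ^ m) t₀ (pow_pos hK'0 m) ht₀
  have ht0 : 0 < t := ht₀.trans_le ht
  have h2 : Φ (2 * t) ≤ Φ (lam ^ m * t) := by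
    rcases eq_or_lt_of_le (le_of_lt hm) with he | hl
    · rw [← he]
    · exact (hmono (by positivity : (0:ℝ) < 2 * t)
        (show (0:ℝ) < lam ^ m * t by positivity) (by nlinarith)).le
  exact absurd ((hlt.trans_le h2).trans_le (key m t ht)) (lt_irrefl _)

theorem right_shift_not_strongly_continuous_on_LPhi
    (Φ : ℝ → ℝ) (hΦ : IsYoungFunction Φ) (hΦ0 : Φ 0 = 0)
    (hnotΔ2 : ∀ K t₀ : ℝ, 0 < K → 0 < t₀ → ∃ t : ℝ, t₀ ≤ t ∧ K * Φ t < Φ (2 * t)) :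
    ∃ v : ℝ → ℝ, Measurable v ∧
      (∃ k : ℝ≥0∞, 0 < k ∧ k < ∞ ∧
        ∫⁻ r in Set.Ioo (0:ℝ) 1, phiE Φ ((‖v r‖₊ : ℝ≥0∞) / k) < ∞) ∧
      ∀ t : ℝ, 0 < t →
        1 ≤ luxNorm Φ (volume.restrict (Set.Ioo (0:ℝ) 1))
              (fun r => (‖(if t < r then v (r - t) else 0) - v r‖₊ : ℝ≥0∞)) := by
  obtain ⟨hmono, -, -, hpos, -, htop⟩ := hΦ
  -- a threshold beyond which `Φ ≥ 2`
  obtain ⟨T, hT⟩ := Filter.eventually_atTop.mp (htop.eventually_ge_atTop 2)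
  set T₂ : ℝ := max T 1 with hT₂def
  have hT₂pos : (0:ℝ) < T₂ := lt_of_lt_of_le one_pos (le_max_right _ _)
  have hT₂ : ∀ x : ℝ, T₂ ≤ x → 2 ≤ Φ x := by
    intro x hx
    have hx1 : (1:ℝ) ≤ x := (le_max_right T 1).trans hx
    have hx0 : (0:ℝ) < x := lt_of_lt_of_le one_pos hx1
    have h2 : 2 ≤ Φ x / x := hT x ((le_max_left T 1).trans hx)
    rw [le_div_iff₀ hx0] at h2
    nlinarith
  -- the factors `l n = 1 + 1/(n+1)` and the points `u n` where `Δ₂`-type bounds fail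
  set l : ℕ → ℝ := fun n => 1 + ((n:ℝ)+1)⁻¹ with hl
  have hl1 : ∀ n, 1 < l n := by
    intro n
    have h0 : (0:ℝ) < ((n:ℝ)+1)⁻¹ := by positivity
    simp only [hl, lt_add_iff_pos_right, h0]
  have hchoose : ∀ n : ℕ, ∃ x : ℝ, T₂ ≤ x ∧ (4:ℝ)^n * Φ x < Φ (l n * x) :=
    fun n => notDelta_gen Φ hmono hpos hnotΔ2 (l n) (hl1 n) _ T₂ hT₂pos
  choose u hu1 hu2 using hchoose
  have hupos : ∀ n, 0 < u n := fun n => hT₂pos.trans_le (hu1 n)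
  have hΦu2 : ∀ n, 2 ≤ Φ (u n) := fun n => hT₂ _ (hu1 n)
  have hlupos : ∀ n, 0 < l n * u n := fun n => mul_pos (lt_trans one_pos (hl1 n)) (hupos n)
  have hΦlupos : ∀ n, 0 < Φ (l n * u n) := fun n => hpos _ (hlupos n)
  have hΦlularge : ∀ n, 2 * 4^n ≤ Φ (l n * u n) := by
    intro n
    have := hu2 n
    have := hΦu2 n
    have h4 : (0:ℝ) < 4 ^ n := by positivity
    nlinarith
  -- the lengths `a n` and partial tails `s n`
  set a : ℕ → ℝ := fun n => (Φ (l n * u n))⁻¹ with ha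
  have hapos : ∀ n, 0 < a n := fun n => inv_pos.mpr (hΦlupos n)
  have hale : ∀ n, a n ≤ (1/2) * (1/4)^n := by
    intro n
    have h4 : (0:ℝ) < 2 * 4 ^ n := by positivity
    have h1 : (Φ (l n * u n))⁻¹ ≤ (2 * 4^n)⁻¹ :=
      inv_anti₀ h4 (hΦlularge n)
    calc a n ≤ (2 * 4^n)⁻¹ := h1
      _ = (1/2) * (1/4)^n := by
          rw [mul_inv]
          congr 1
          · norm_num
          · rw [← inv_pow]; norm_num
  have hsum : Summable a :=
    Summable.of_nonneg_of_le (fun n => (hapos n).le) hale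
      ((summable_geometric_of_lt_one (by norm_num) (by norm_num)).mul_left _)
  set s : ℕ → ℝ := fun n => ∑' m, a (m + n) with hs
  have hsumshift : ∀ n, Summable (fun m => a (m + n)) :=
    fun n => (summable_nat_add_iff n).mpr hsum
  have hs_succ : ∀ n, s n = a n + s (n+1) := by
    intro n
    simp only [hs]
    rw [Summable.tsum_eq_zero_add (hsumshift n)]
    simp only [zero_add]
    congr 1
    apply tsum_congr; intro m; congr 1; omega
  have hs_nonneg : ∀ n, 0 ≤ s n := fun n => tsum_nonneg (fun m => (hapos _).le)
  have hs_pos : ∀ n, 0 < s n := by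
    intro n
    have h1 := hs_nonneg (n+1)
    have h2 := hapos n
    rw [hs_succ n]; linarith
  have hs_step : ∀ n, s (n+1) < s n := by
    intro n
    have h2 := hapos n
    rw [hs_succ n]; linarith
  have hs_anti : StrictAnti s := strictAnti_nat_of_succ_lt hs_step
  have hs_le : ∀ n, s n ≤ (2/3) * (1/4)^n := by
    intro n
    have hb : ∀ m : ℕ, a (m + n) ≤ (1/2) * (1/4)^(m+n) := fun m => hale _
    have hgs : Summable (fun m : ℕ => (1/2 : ℝ) * ((1/4)^(m+n))) := by
      simp_rw [pow_add]
      exact ((summable_geometric_of_lt_one (by norm_num) (by norm_num)).mul_right _).mul_left _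
    calc s n ≤ ∑' m, (1/2:ℝ) * (1/4)^(m+n) := Summable.tsum_le_tsum hb (hsumshift n) hgs
      _ = (1/2) * ((∑' m, (1/4:ℝ)^m) * (1/4)^n) := by
          simp_rw [pow_add]
          rw [tsum_mul_left, tsum_mul_right]
      _ ≤ (2/3) * (1/4)^n := by
          rw [tsum_geometric_of_lt_one (by norm_num) (by norm_num)]
          have := pow_nonneg (by norm_num : (0:ℝ) ≤ 1/4) n
          nlinarith
  have hs0 : s 0 < 1 := by
    have := hs_le 0
    simp only [pow_zero, mul_one] at this
    linarith
  -- the blocks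
  set E : ℕ → Set ℝ := fun n => Set.Ico (s (n+1)) (s n) with hE
  have hEmeas : ∀ n, MeasurableSet (E n) := fun n => measurableSet_Ico
  have hEsub : ∀ n, E n ⊆ Set.Ioo 0 1 := by
    intro n r hr
    refine ⟨lt_of_lt_of_le (hs_pos (n+1)) hr.1, ?_⟩
    calc r < s n := hr.2
      _ ≤ s 0 := hs_anti.antitone (Nat.zero_le n)
      _ < 1 := hs0
  have hEvol : ∀ n, volume (E n) = ENNReal.ofReal (a n) := by
    intro n
    simp only [hE, Real.volume_Ico]
    congr 1
    rw [hs_succ n]; ring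
  have hEdisj : ∀ m n : ℕ, ∀ r : ℝ, r ∈ E m → r ∈ E n → m = n := by
    intro m n r hm hn
    by_contra hne
    rcases Nat.lt_or_ge m n with hc | hc
    · exact absurd ((hn.2.trans_le (hs_anti.antitone hc)).trans_le hm.1) (lt_irrefl r)
    · have hc' : n < m := lt_of_le_of_ne hc (fun hh => hne hh.symm)
      exact absurd ((hm.2.trans_le (hs_anti.antitone hc')).trans_le hn.1) (lt_irrefl r)
  -- the function v
  set v : ℝ → ℝ :=
    fun r => (∑' n, (E n).indicator (fun _ => ENNReal.ofReal (u n)) r).toReal with hv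
  have hvmeas : Measurable v :=
    (Measurable.ennreal_tsum fun n => measurable_const.indicator (hEmeas n)).ennreal_toReal
  have hv_on : ∀ n r, r ∈ E n → v r = u n := by
    intro n r hr
    simp only [hv]
    rw [tsum_eq_single n
      (fun m hm => Set.indicator_of_notMem (fun hmem => hm (hEdisj m n r hmem hr)) _),
      Set.indicator_of_mem hr, ENNReal.toReal_ofReal (hupos n).le]
  have hv_off : ∀ r, (∀ n, r ∉ E n) → v r = 0 := by
    intro r hr
    simp only [hv]
    rw [tsum_congr (fun n => Set.indicator_of_notMem (hr n)
      (fun _ => ENNReal.ofReal (u n))), tsum_zero]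
    simp
  have hnormv : ∀ n r, r ∈ E n → (‖v r‖₊ : ℝ≥0∞) = ENNReal.ofReal (u n) := by
    intro n r hr
    rw [hv_on n r hr, ← enorm_eq_nnnorm, Real.enorm_eq_ofReal (hupos n).le]
  have hval : ∀ (k' : ℝ), 0 < k' → ∀ n,
      phiE Φ (ENNReal.ofReal (u n) / ENNReal.ofReal k') = ENNReal.ofReal (Φ (u n / k')) := by
    intro k' hk' n
    rw [← ENNReal.ofReal_div_of_pos hk', phiE, if_neg ENNReal.ofReal_ne_top,
      ENNReal.toReal_ofReal (div_pos (hupos n) hk').le]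
  have hval0 : ∀ n, phiE Φ (ENNReal.ofReal (u n)) = ENNReal.ofReal (Φ (u n)) := by
    intro n
    rw [phiE, if_neg ENNReal.ofReal_ne_top, ENNReal.toReal_ofReal (hupos n).le]
  refine ⟨v, hvmeas, ⟨1, one_pos, ENNReal.one_lt_top, ?_⟩, ?_⟩
  · -- v ∈ L_Φ with k = 1
    simp only [div_one]
    have hpt : ∀ r : ℝ, phiE Φ ((‖v r‖₊ : ℝ≥0∞))
        = ∑' n, (E n).indicator (fun _ => ENNReal.ofReal (Φ (u n))) r := by
      intro r
      by_cases h : ∃ n, r ∈ E n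
      · obtain ⟨n, hn⟩ := h
        rw [tsum_eq_single n
          (fun m hm => Set.indicator_of_notMem (fun hmem => hm (hEdisj m n r hmem hn)) _),
          Set.indicator_of_mem hn, hnormv n r hn, hval0 n]
      · push_neg at h
        rw [tsum_congr (fun n => Set.indicator_of_notMem (h n)
          (fun _ => ENNReal.ofReal (Φ (u n)))), tsum_zero, hv_off r h]
        simp [phiE, hΦ0]
    calc ∫⁻ r in Set.Ioo (0:ℝ) 1, phiE Φ ((‖v r‖₊ : ℝ≥0∞))
        = ∫⁻ r in Set.Ioo (0:ℝ) 1,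
            ∑' n, (E n).indicator (fun _ => ENNReal.ofReal (Φ (u n))) r :=
          lintegral_congr (fun r => hpt r)
      _ = ∑' n, ∫⁻ r, (E n).indicator (fun _ => ENNReal.ofReal (Φ (u n))) r
            ∂(volume.restrict (Set.Ioo (0:ℝ) 1)) :=
          lintegral_tsum (fun n => (measurable_const.indicator (hEmeas n)).aemeasurable)
      _ = ∑' n, ENNReal.ofReal (Φ (u n)) * volume (E n) := by
          refine tsum_congr (fun n => ?_)
          rw [lintegral_indicator (hEmeas n), Measure.restrict_restrict (hEmeas n),
            Set.inter_eq_self_of_subset_left (hEsub n), setLIntegral_const]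
      _ ≤ ∑' n, (ENNReal.ofReal (1/4))^n := by
          refine ENNReal.tsum_le_tsum (fun n => ?_)
          rw [hEvol n, ← ENNReal.ofReal_mul (hpos _ (hupos n)).le,
            ← ENNReal.ofReal_pow (by norm_num)]
          refine ENNReal.ofReal_le_ofReal ?_
          have h1 := hΦlupos n
          have h14 : (0:ℝ) ≤ (1/4)^n := by positivity
          have h2 := mul_le_mul_of_nonneg_left (hu2 n).le h14
          have hid : (1/4:ℝ)^n * ((4:ℝ)^n * Φ (u n)) = Φ (u n) := by
            rw [← mul_assoc, ← mul_pow]; norm_num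
          have ha' : a n = (Φ (l n * u n))⁻¹ := rfl
          rw [ha', mul_comm, ← div_eq_inv_mul, div_le_iff₀ h1]
          linarith
      _ < ⊤ := by
          rw [ENNReal.tsum_geometric]
          refine ENNReal.inv_lt_top.mpr ?_
          rw [tsub_pos_iff_lt]
          exact ENNReal.ofReal_lt_one.mpr (by norm_num)
  · -- the shift estimate
    intro t ht
    refine le_sInf ?_
    rintro k ⟨hk0, hktop, hkint⟩
    by_contra hlt
    push_neg at hlt
    set k' : ℝ := k.toReal with hk'def
    have hk'0 : 0 < k' := ENNReal.toReal_pos hk0.ne' hktop.ne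
    have hk'1 : k' < 1 := by
      have h := (ENNReal.toReal_lt_toReal hktop.ne (by simp : (1:ℝ≥0∞) ≠ ⊤)).mpr hlt
      simpa using h
    have hkeq : k = ENNReal.ofReal k' := (ENNReal.ofReal_toReal hktop.ne).symm
    -- choose M₁ with s M₁ < t
    have hstend : Filter.Tendsto s Filter.atTop (nhds 0) := by
      refine squeeze_zero (fun n => (hs_pos n).le) hs_le ?_
      have h := (tendsto_pow_atTop_nhds_zero_of_lt_one
        (by norm_num : (0:ℝ) ≤ 1/4) (by norm_num)).const_mul (2/3 : ℝ)
      simpa using h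
    obtain ⟨M₁, hM₁⟩ := (hstend.eventually_lt_const ht).exists
    -- choose N beyond which l m * k' ≤ 1
    obtain ⟨N, hN⟩ := exists_nat_ge (1 / (1 - k'))
    have hM₂ : ∀ m : ℕ, N ≤ m → l m * k' ≤ 1 := by
      intro m hm
      have h1k : 0 < 1 - k' := by linarith
      have hmN : (1:ℝ)/(1-k') ≤ (m:ℝ) + 1 := by
        calc (1:ℝ)/(1-k') ≤ (N:ℝ) := hN
          _ ≤ (m:ℝ) := Nat.cast_le.mpr hm
          _ ≤ (m:ℝ) + 1 := by linarith
      have hm1 : (0:ℝ) < (m:ℝ) + 1 := by positivity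
      have h2 : ((m:ℝ)+1)⁻¹ ≤ 1 - k' := by
        rw [inv_le_comm₀ hm1 h1k]
        rw [one_div] at hmN
        exact hmN
      have h3 : l m ≤ 2 - k' := by
        simp only [hl]; linarith
      nlinarith [hk'0]
    set M : ℕ := max M₁ N with hM
    have hsM : s M ≤ s M₁ := hs_anti.antitone (le_max_left _ _)
    -- pointwise lower bound by a divergent sum of indicators
    have hptlow : ∀ r : ℝ,
        (∑' m : ℕ, (E (M + m)).indicator
          (fun _ => ENNReal.ofReal (Φ (l (M+m) * u (M+m)))) r)
          ≤ phiE Φ ((‖(if t < r then v (r - t) else 0) - v r‖₊ : ℝ≥0∞) / k) := by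
      intro r
      by_cases h : ∃ j, r ∈ E (M + j)
      · obtain ⟨j, hj⟩ := h
        rw [tsum_eq_single j (fun m hm => Set.indicator_of_notMem
          (fun hmem => hm (Nat.add_left_cancel (hEdisj _ _ r hmem hj))) _),
          Set.indicator_of_mem hj]
        have hrt : r < t := by
          calc r < s (M + j) := hj.2
            _ ≤ s M := hs_anti.antitone (Nat.le_add_right _ _)
            _ ≤ s M₁ := hsM
            _ < t := hM₁
        rw [if_neg (not_lt.mpr hrt.le), zero_sub, nnnorm_neg, hnormv _ r hj, hkeq,
          hval k' hk'0]
        refine ENNReal.ofReal_le_ofReal ?_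
        have hlk : l (M + j) * k' ≤ 1 := hM₂ _ (le_trans (le_max_right M₁ N) (Nat.le_add_right _ _))
        have hu0 := hupos (M + j)
        have harg : l (M+j) * u (M+j) ≤ u (M+j) / k' := by
          rw [le_div_iff₀ hk'0]
          nlinarith
        exact hmono.monotoneOn (hlupos (M+j)) (show u (M+j)/k' ∈ Set.Ioi (0:ℝ) by
          exact div_pos hu0 hk'0) harg
      · push_neg at h
        rw [tsum_congr (fun m => Set.indicator_of_notMem (h m)
          (fun _ => ENNReal.ofReal (Φ (l (M+m) * u (M+m))))), tsum_zero]
        exact zero_le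
    have htop' : (⊤:ℝ≥0∞) ≤ ∫⁻ r in Set.Ioo (0:ℝ) 1,
        phiE Φ ((‖(if t < r then v (r - t) else 0) - v r‖₊ : ℝ≥0∞) / k) := by
      calc (⊤:ℝ≥0∞) = ∑' _ : ℕ, (1:ℝ≥0∞) :=
            (ENNReal.tsum_const_eq_top_of_ne_zero one_ne_zero).symm
        _ = ∑' m : ℕ, ENNReal.ofReal (Φ (l (M+m) * u (M+m))) * volume (E (M+m)) := by
            refine tsum_congr (fun m => ?_)
            rw [hEvol, ← ENNReal.ofReal_mul (hΦlupos _).le]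
            have ha' : a (M+m) = (Φ (l (M+m) * u (M+m)))⁻¹ := rfl
            rw [ha', mul_inv_cancel₀ (hΦlupos _).ne', ENNReal.ofReal_one]
        _ = ∑' m : ℕ, ∫⁻ r, (E (M+m)).indicator
              (fun _ => ENNReal.ofReal (Φ (l (M+m) * u (M+m)))) r
              ∂(volume.restrict (Set.Ioo (0:ℝ) 1)) := by
            refine tsum_congr (fun m => ?_)
            rw [lintegral_indicator (hEmeas _), Measure.restrict_restrict (hEmeas _),
              Set.inter_eq_self_of_subset_left (hEsub _), setLIntegral_const]
        _ = ∫⁻ r in Set.Ioo (0:ℝ) 1, ∑' m : ℕ, (E (M+m)).indicator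
              (fun _ => ENNReal.ofReal (Φ (l (M+m) * u (M+m)))) r :=
            (lintegral_tsum (fun m => (measurable_const.indicator (hEmeas _)).aemeasurable)).symm
        _ ≤ _ := lintegral_mono hptlow
    have : (⊤:ℝ≥0∞) ≤ 1 := le_trans htop' hkint
    simp at this
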